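/- Under the stated hypotheses, the singular set of G is the graph of the function φ(x) = -((-a00·a11·p11 + a01·a10·p01)x + (a00·a11·p00·p11 - a01·a10·p01·p10)) / ((a00·a11 - a01·a10)x + (-a00·a11·p00 + a01·a10·p10)), defined on the set where the denominator is nonzero; that is, (x,y) satisfies det JG(x,y) = 0 if and only if the denominator (a00·a11 - a01·a10)x + (-a00·a11·p00 + a01·a10·p10) is nonzero and y = φ(x). -/

import Mathlib

/-- The singular set of `G` is the graph of
`φ(x) = -((-a00a11p11 + a01a10p01)x + (a00a11p00p11 - a01a10p01p10)) /
        ((a00a11 - a01a10)x + (-a00a11p00 + a01a10p10))`: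
`detJG(x,y) = 0` iff the denominator is nonzero and `y = φ(x)`. -/
theorem singular_set_is_graph
    (a00 a01 a10 a11 p00 p01 p10 p11 : ℝ)
    (h00 : a00 ≠ 0) (h01 : a01 ≠ 0) (h10 : a10 ≠ 0) (h11 : a11 ≠ 0)
    (hdet : a00 * a11 - a01 * a10 ≠ 0) (hp0 : p00 ≠ p10) (hp1 : p01 ≠ p11) :
    ∀ x y : ℝ,
      (4 * (a00 * a11 * (x - p00) * (y - p11) - a01 * a10 * (y - p01) * (x - p10)) = 0) ↔
      ((a00 * a11 - a01 * a10) * x + (-(a00 * a11 * p00) + a01 * a10 * p10) ≠ 0 ∧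
        y = -(((-(a00 * a11 * p11) + a01 * a10 * p01) * x +
                (a00 * a11 * p00 * p11 - a01 * a10 * p01 * p10)) /
              ((a00 * a11 - a01 * a10) * x + (-(a00 * a11 * p00) + a01 * a10 * p10)))) := by
  intro x y
  constructor
  · intro h
    have hden : (a00 * a11 - a01 * a10) * x + (-(a00 * a11 * p00) + a01 * a10 * p10) ≠ 0 := by
      intro hd
      have hnum : (-(a00 * a11 * p11) + a01 * a10 * p01) * x +
          (a00 * a11 * p00 * p11 - a01 * a10 * p01 * p10) = 0 := by
        linear_combination h / 4 - y * hd
      have key : a00 * a11 * (a01 * a10) * ((p10 - p00) * (p11 - p01)) = 0 := by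
        linear_combination (a00 * a11 - a01 * a10) * hnum -
          (-(a00 * a11 * p11) + a01 * a10 * p01) * hd
      have : a00 * a11 * (a01 * a10) * ((p10 - p00) * (p11 - p01)) ≠ 0 := by
        apply mul_ne_zero (mul_ne_zero (mul_ne_zero h00 h11) (mul_ne_zero h01 h10))
        exact mul_ne_zero (sub_ne_zero.mpr (Ne.symm hp0)) (sub_ne_zero.mpr (Ne.symm hp1))
      exact this key
    refine ⟨hden, ?_⟩
    rw [← neg_div, eq_div_iff hden]
    linear_combination h / 4
  · rintro ⟨hden, hy⟩
    subst hy
    linear_combination (-4 : ℝ) * div_mul_cancel₀ ((-(a00 * a11 * p11) + a01 * a10 * p01) * x +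
      (a00 * a11 * p00 * p11 - a01 * a10 * p01 * p10)) hden
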